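/- Convergence to steady states of the determining form: let X be a real Banach space, ρ > 0, a ∈ X with ‖a‖ ≤ ρ, G : X → X continuous and Lipschitz on B̄(0, ρ), and F(v) = −‖v − G(v)‖²·(v − a). If v : [0, ∞) → B̄(0, ρ) is differentiable with v'(s) = F(v(s)) for all s ≥ 0, then there exist β∞ ∈ [0, 1] and v∞ = β∞·v(0) + (1 − β∞)·a such that v(s) → v∞ in X as s → ∞ and F(v∞) = 0; that is, every such solution converges to a steady state of the equation v' = F(v). -/

import Mathlib

open Filter Real Set intervalIntegral

/-- Every solution of the determining form converges, as `s → ∞`,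
to a steady state which is a convex combination of `v 0` and `a`. -/
theorem detform_convergence_to_steady_state
    {X : Type*} [NormedAddCommGroup X] [NormedSpace ℝ X] [CompleteSpace X]
    (ρ : ℝ) (hρ : 0 < ρ) (a : X) (ha : ‖a‖ ≤ ρ)
    (G : X → X) (hGcont : Continuous G)
    (K : NNReal) (hG : LipschitzOnWith K G (Metric.closedBall 0 ρ))
    (v : ℝ → X)
    (hvball : ∀ s : ℝ, 0 ≤ s → v s ∈ Metric.closedBall (0:X) ρ)
    (hv : ∀ s : ℝ, 0 ≤ s →
      HasDerivAt v ((-(‖v s - G (v s)‖ ^ 2)) • (v s - a)) s) :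
    ∃ β : ℝ, β ∈ Set.Icc (0:ℝ) 1 ∧
      Filter.Tendsto v Filter.atTop (nhds (β • v 0 + (1 - β) • a)) ∧
      (-(‖(β • v 0 + (1 - β) • a) - G (β • v 0 + (1 - β) • a)‖ ^ 2))
          • ((β • v 0 + (1 - β) • a) - a) = 0 := by
  -- continuity of v on [0, ∞)
  have hvc : ∀ s : ℝ, 0 ≤ s → ContinuousAt v s := fun s hs => (hv s hs).continuousAt
  -- a globally continuous extension of v
  set w : ℝ → X := fun s => v (max s 0) with hw_def
  have hw_eq : ∀ s : ℝ, 0 ≤ s → w s = v s := fun s hs => by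
    simp [hw_def, max_eq_left hs]
  have hwcont : Continuous w := by
    have hvOn : ContinuousOn v (Set.Ici 0) := fun s hs => (hvc s hs).continuousWithinAt
    exact hvOn.comp_continuous (continuous_id.max continuous_const)
      (fun s => le_max_right s 0)
  -- the (continuous, nonnegative) dissipation rate
  set φ : ℝ → ℝ := fun s => ‖w s - G (w s)‖ ^ 2 with hφ_def
  have hφcont : Continuous φ := ((hwcont.sub (hGcont.comp hwcont)).norm).pow 2
  have hφnonneg : ∀ s, 0 ≤ φ s := fun s => pow_nonneg (norm_nonneg _) 2
  have hφ_eq : ∀ s : ℝ, 0 ≤ s → φ s = ‖v s - G (v s)‖ ^ 2 := fun s hs => by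
    simp [hφ_def, hw_eq s hs]
  -- its primitive
  set ψ : ℝ → ℝ := fun s => ∫ t in (0:ℝ)..s, φ t with hψ_def
  have hψderiv : ∀ s : ℝ, HasDerivAt ψ (φ s) s := fun s =>
    (hφcont.integral_hasStrictDerivAt 0 s).hasDerivAt
  have hψ0 : ψ 0 = 0 := intervalIntegral.integral_same
  have hψmono : Monotone ψ := by
    apply monotone_of_deriv_nonneg
    · exact fun s => (hψderiv s).differentiableAt
    · intro s; rw [(hψderiv s).deriv]; exact hφnonneg s
  -- the explicit solution formula: v t = a + exp (-ψ t) • (v 0 - a) for t ≥ 0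
  have hform : ∀ t : ℝ, 0 ≤ t → v t = a + Real.exp (-ψ t) • (v 0 - a) := by
    intro t ht
    set u : ℝ → X := fun s => Real.exp (ψ s) • (v s - a) with hu_def
    have hud : ∀ s : ℝ, 0 ≤ s → HasDerivAt u 0 s := by
      intro s hs
      have h1 : HasDerivAt (fun x => Real.exp (ψ x)) (Real.exp (ψ s) * φ s) s :=
        (Real.hasDerivAt_exp (ψ s)).comp s (hψderiv s)
      have h2 : HasDerivAt (fun x => v x - a) ((-(‖v s - G (v s)‖ ^ 2)) • (v s - a)) s :=
        (hv s hs).sub_const a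
      have := h1.smul h2
      convert this using 1
      · rfl
      rw [hφ_eq s hs]
      simp only [smul_smul]
      rw [← add_smul]
      have : Real.exp (ψ s) * -‖v s - G (v s)‖ ^ 2 +
          Real.exp (ψ s) * ‖v s - G (v s)‖ ^ 2 = 0 := by ring
      rw [this, zero_smul]
    have hucont : ContinuousOn u (Icc 0 t) := by
      intro s hs
      exact ((hud s hs.1).continuousAt.continuousWithinAt)
    have huconst : u t = u 0 := by
      rcases eq_or_lt_of_le ht with h | h
      · rw [← h]
      · exact constant_of_has_deriv_right_zero hucont
          (fun x hx => ((hud x hx.1).hasDerivWithinAt)) t ⟨ht, le_refl t⟩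
    have h0 : u 0 = v 0 - a := by simp [hu_def, hψ0]
    have : Real.exp (ψ t) • (v t - a) = v 0 - a := by
      rw [← h0, ← huconst]
    have h2 : v t - a = Real.exp (-ψ t) • (v 0 - a) := by
      rw [← this, smul_smul, ← Real.exp_add, neg_add_cancel, Real.exp_zero, one_smul]
    rw [← h2]; abel
  -- algebraic identity for the limit point
  have hconv : ∀ β : ℝ, a + β • (v 0 - a) = β • v 0 + (1 - β) • a := by
    intro β
    rw [smul_sub, sub_smul, one_smul]
    abel
  by_cases hB : BddAbove (Set.range ψ)
  · -- bounded case: ψ converges to its supremum L, v converges to a genuine steady state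
    set L : ℝ := ⨆ t, ψ t with hL_def
    have hψtend : Tendsto ψ atTop (nhds L) := tendsto_atTop_ciSup hψmono hB
    have hL0 : 0 ≤ L := hψ0 ▸ le_ciSup hB 0
    set β : ℝ := Real.exp (-L) with hβ_def
    have hβ0 : 0 < β := Real.exp_pos _
    have hβ1 : β ≤ 1 := by
      rw [hβ_def, ← Real.exp_zero]
      exact Real.exp_le_exp.2 (by linarith)
    have hvtend : Tendsto v atTop (nhds (β • v 0 + (1 - β) • a)) := by
      have h1 : Tendsto (fun t => a + Real.exp (-ψ t) • (v 0 - a)) atTop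
          (nhds (a + Real.exp (-L) • (v 0 - a))) := by
        exact tendsto_const_nhds.add
          (((Real.continuous_exp.tendsto _).comp (hψtend.neg)).smul_const _)
      rw [← hconv]
      exact h1.congr' (by filter_upwards [eventually_ge_atTop (0:ℝ)] with t ht
        using (hform t ht).symm)
    refine ⟨β, ⟨le_of_lt hβ0, hβ1⟩, hvtend, ?_⟩
    -- the limit is a steady state: the dissipation rate must vanish at the limit
    set vL : X := β • v 0 + (1 - β) • a with hvinf_def
    have hc : ‖vL - G vL‖ ^ 2 = 0 := by
      by_contra hne
      have hcpos : 0 < ‖vL - G vL‖ ^ 2 :=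
        lt_of_le_of_ne (pow_nonneg (norm_nonneg _) 2) (Ne.symm hne)
      set c : ℝ := ‖vL - G vL‖ ^ 2 with hc_def
      -- φ t → c
      have hφtend : Tendsto φ atTop (nhds c) := by
        have hwtend : Tendsto w atTop (nhds vL) := by
          apply hvtend.congr'
          filter_upwards [eventually_ge_atTop (0:ℝ)] with t ht using (hw_eq t ht).symm
        exact (((hwtend.sub (hGcont.continuousAt.tendsto.comp hwtend)).norm).pow 2)
      -- eventually φ t ≥ c/2
      have hev : ∀ᶠ t in atTop, c / 2 ≤ φ t :=
        hφtend.eventually (eventually_ge_nhds (by linarith : c / 2 < c))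
      obtain ⟨T, hT⟩ := (hev.and (eventually_ge_atTop (0:ℝ))).exists_forall_of_atTop
      -- linear lower bound on ψ, so ψ is unbounded: contradiction
      have hlin : ∀ t, T ≤ t → ψ T + c / 2 * (t - T) ≤ ψ t := by
        intro t ht
        have hint1 : IntervalIntegrable φ MeasureTheory.volume 0 T :=
          hφcont.intervalIntegrable _ _
        have hint2 : IntervalIntegrable φ MeasureTheory.volume T t :=
          hφcont.intervalIntegrable _ _
        have hsplit : ψ t = ψ T + ∫ s in T..t, φ s := by
          rw [hψ_def]
          simp only
          rw [← intervalIntegral.integral_add_adjacent_intervals hint1 hint2]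
        have hmono2 : (c / 2) * (t - T) ≤ ∫ s in T..t, φ s := by
          have : ∫ s in T..t, (c/2 : ℝ) ≤ ∫ s in T..t, φ s := by
            apply intervalIntegral.integral_mono_on ht (intervalIntegrable_const) hint2
            intro s hs
            exact (hT s hs.1).1
          rwa [intervalIntegral.integral_const, smul_eq_mul, mul_comm] at this
        linarith [hsplit, hmono2]
      have h0 : Tendsto (fun t : ℝ => t - T) atTop atTop :=
        (tendsto_atTop_add_const_right atTop (-T) tendsto_id).congr
          (fun t => (sub_eq_add_neg t T).symm)
      have hlin2 : Tendsto (fun t : ℝ => ψ T + c / 2 * (t - T)) atTop atTop :=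
        tendsto_atTop_add_const_left atTop (ψ T) (h0.const_mul_atTop (by positivity))
      have htop : Tendsto ψ atTop atTop := by
        apply tendsto_atTop_mono' atTop _ hlin2
        filter_upwards [eventually_ge_atTop T] with t ht using hlin t ht
      obtain ⟨t, ht⟩ := (htop.eventually_ge_atTop (L + 1)).exists
      have : ψ t ≤ L := le_ciSup hB t
      linarith
    rw [hc]
    simp
  · -- unbounded case: ψ → ∞, so v → a and the limit is trivially a steady state
    refine ⟨0, ⟨le_refl 0, zero_le_one⟩, ?_, ?_⟩
    · have hψtop : Tendsto ψ atTop atTop := tendsto_atTop_atTop_of_monotone' hψmono hB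
      have hexp : Tendsto (fun t => Real.exp (-ψ t)) atTop (nhds 0) :=
        Real.tendsto_exp_neg_atTop_nhds_zero.comp hψtop
      have h1 : Tendsto (fun t => a + Real.exp (-ψ t) • (v 0 - a)) atTop
          (nhds (a + (0:ℝ) • (v 0 - a))) :=
        tendsto_const_nhds.add (hexp.smul_const (v 0 - a))
      rw [zero_smul, add_zero] at h1
      have : Tendsto v atTop (nhds a) := by
        apply h1.congr'
        filter_upwards [eventually_ge_atTop (0:ℝ)] with t ht using (hform t ht).symm
      simpa using this
    · simp
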